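/- Let p be an odd prime, let k ≥ 1 be an integer, and let G be an abelian subgroup of GL₂(𝔽_p). Suppose that some GL₂(𝔽_p)-conjugate of D^k or some GL₂(𝔽_p)-conjugate of C_ns(p)^k is contained in G. If p > 2k + 1, then G is conjugate in GL₂(𝔽_p) to a subgroup of C_s(p) or to a subgroup of C_ns(p). -/

import Mathlib

open Matrix

abbrev GL2 (p : ℕ) := GL (Fin 2) (ZMod p)

/-- The subgroup `SL₂` of `GL₂(ℤ/nℤ)`, i.e. the kernel of the determinant. -/
def SL2sub (n : ℕ) : Subgroup (GL (Fin 2) (ZMod n)) :=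
  (Matrix.GeneralLinearGroup.det : GL (Fin 2) (ZMod n) →* (ZMod n)ˣ).ker

/-- The split Cartan subgroup: diagonal matrices in `GL₂(𝔽_p)`. -/
def Cs (p : ℕ) : Subgroup (GL2 p) where
  carrier := { g | (g : Matrix (Fin 2) (Fin 2) (ZMod p)) 0 1 = 0 ∧
      (g : Matrix (Fin 2) (Fin 2) (ZMod p)) 1 0 = 0 }
  one_mem' := by simp
  mul_mem' := by
    rintro a b ⟨ha1, ha2⟩ ⟨hb1, hb2⟩
    refine ⟨?_, ?_⟩ <;>
      simp [Units.val_mul, Matrix.mul_apply, Fin.sum_univ_two, ha1, ha2, hb1, hb2]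
  inv_mem' := by
    rintro a ⟨h1, h2⟩
    have h : ((a⁻¹ : GL2 p) : Matrix (Fin 2) (Fin 2) (ZMod p))
        = Ring.inverse ((a : Matrix (Fin 2) (Fin 2) (ZMod p)).det) •
          Matrix.adjugate (a : Matrix (Fin 2) (Fin 2) (ZMod p)) := by
      rw [Matrix.coe_units_inv, Matrix.inv_def]
    refine ⟨?_, ?_⟩ <;> simp [h, Matrix.adjugate_fin_two, h1, h2]

/-- The Borel subgroup: upper triangular matrices in `GL₂(𝔽_p)`. -/
def B0 (p : ℕ) : Subgroup (GL2 p) where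
  carrier := { g | (g : Matrix (Fin 2) (Fin 2) (ZMod p)) 1 0 = 0 }
  one_mem' := by simp
  mul_mem' := by
    intro a b ha hb
    simp only [Set.mem_setOf_eq] at *
    simp [Units.val_mul, Matrix.mul_apply, Fin.sum_univ_two, ha, hb]
  inv_mem' := by
    intro a h
    simp only [Set.mem_setOf_eq] at *
    have hh : ((a⁻¹ : GL2 p) : Matrix (Fin 2) (Fin 2) (ZMod p))
        = Ring.inverse ((a : Matrix (Fin 2) (Fin 2) (ZMod p)).det) •
          Matrix.adjugate (a : Matrix (Fin 2) (Fin 2) (ZMod p)) := by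
      rw [Matrix.coe_units_inv, Matrix.inv_def]
    simp [hh, Matrix.adjugate_fin_two, h]

/-- The subgroup of scalar matrices in `GL₂(𝔽_p)`. -/
def Zs (p : ℕ) : Subgroup (GL2 p) where
  carrier := { g | (g : Matrix (Fin 2) (Fin 2) (ZMod p)) 0 1 = 0 ∧
      (g : Matrix (Fin 2) (Fin 2) (ZMod p)) 1 0 = 0 ∧
      (g : Matrix (Fin 2) (Fin 2) (ZMod p)) 1 1 = (g : Matrix (Fin 2) (Fin 2) (ZMod p)) 0 0 }
  one_mem' := by simp
  mul_mem' := by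
    rintro a b ⟨ha1, ha2, ha3⟩ ⟨hb1, hb2, hb3⟩
    refine ⟨?_, ?_, ?_⟩ <;>
      simp [Units.val_mul, Matrix.mul_apply, Fin.sum_univ_two, ha1, ha2, ha3, hb1, hb2, hb3]
  inv_mem' := by
    rintro a ⟨h1, h2, h3⟩
    have hh : ((a⁻¹ : GL2 p) : Matrix (Fin 2) (Fin 2) (ZMod p))
        = Ring.inverse ((a : Matrix (Fin 2) (Fin 2) (ZMod p)).det) •
          Matrix.adjugate (a : Matrix (Fin 2) (Fin 2) (ZMod p)) := by
      rw [Matrix.coe_units_inv, Matrix.inv_def]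
    refine ⟨?_, ?_, ?_⟩ <;> simp [hh, Matrix.adjugate_fin_two, h1, h2, h3]

/-- The normalizer of the split Cartan subgroup: diagonal and antidiagonal matrices. -/
def Ns (p : ℕ) : Subgroup (GL2 p) where
  carrier := { g | ((g : Matrix (Fin 2) (Fin 2) (ZMod p)) 0 1 = 0 ∧
      (g : Matrix (Fin 2) (Fin 2) (ZMod p)) 1 0 = 0) ∨
      ((g : Matrix (Fin 2) (Fin 2) (ZMod p)) 0 0 = 0 ∧
      (g : Matrix (Fin 2) (Fin 2) (ZMod p)) 1 1 = 0) }
  one_mem' := by simp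
  mul_mem' := by
    rintro a b (⟨ha1, ha2⟩ | ⟨ha1, ha2⟩) (⟨hb1, hb2⟩ | ⟨hb1, hb2⟩)
    · refine Or.inl ⟨?_, ?_⟩ <;>
        simp [Units.val_mul, Matrix.mul_apply, Fin.sum_univ_two, ha1, ha2, hb1, hb2]
    · refine Or.inr ⟨?_, ?_⟩ <;>
        simp [Units.val_mul, Matrix.mul_apply, Fin.sum_univ_two, ha1, ha2, hb1, hb2]
    · refine Or.inr ⟨?_, ?_⟩ <;>
        simp [Units.val_mul, Matrix.mul_apply, Fin.sum_univ_two, ha1, ha2, hb1, hb2]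
    · refine Or.inl ⟨?_, ?_⟩ <;>
        simp [Units.val_mul, Matrix.mul_apply, Fin.sum_univ_two, ha1, ha2, hb1, hb2]
  inv_mem' := by
    intro a h
    have hh : ((a⁻¹ : GL2 p) : Matrix (Fin 2) (Fin 2) (ZMod p))
        = Ring.inverse ((a : Matrix (Fin 2) (Fin 2) (ZMod p)).det) •
          Matrix.adjugate (a : Matrix (Fin 2) (Fin 2) (ZMod p)) := by
      rw [Matrix.coe_units_inv, Matrix.inv_def]
    rcases h with ⟨h1, h2⟩ | ⟨h1, h2⟩
    · refine Or.inl ⟨?_, ?_⟩ <;> simp [hh, Matrix.adjugate_fin_two, h1, h2]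
    · refine Or.inr ⟨?_, ?_⟩ <;> simp [hh, Matrix.adjugate_fin_two, h1, h2]

/-- The nonsplit Cartan subgroup attached to a nonsquare `ε`:
invertible matrices of the form `[[a, bε], [b, a]]`. -/
def Cns (p : ℕ) (ε : ZMod p) : Subgroup (GL2 p) where
  carrier := { g | (g : Matrix (Fin 2) (Fin 2) (ZMod p)) 1 1 =
      (g : Matrix (Fin 2) (Fin 2) (ZMod p)) 0 0 ∧
      (g : Matrix (Fin 2) (Fin 2) (ZMod p)) 0 1 = ε * (g : Matrix (Fin 2) (Fin 2) (ZMod p)) 1 0 }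
  one_mem' := by simp
  mul_mem' := by
    rintro a b ⟨ha1, ha2⟩ ⟨hb1, hb2⟩
    refine ⟨?_, ?_⟩ <;>
      simp [Units.val_mul, Matrix.mul_apply, Fin.sum_univ_two, ha1, ha2, hb1, hb2] <;>
      try ring
  inv_mem' := by
    rintro a ⟨h1, h2⟩
    have hh : ((a⁻¹ : GL2 p) : Matrix (Fin 2) (Fin 2) (ZMod p))
        = Ring.inverse ((a : Matrix (Fin 2) (Fin 2) (ZMod p)).det) •
          Matrix.adjugate (a : Matrix (Fin 2) (Fin 2) (ZMod p)) := by
      rw [Matrix.coe_units_inv, Matrix.inv_def]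
    refine ⟨?_, ?_⟩ <;> simp [hh, Matrix.adjugate_fin_two, h1, h2] <;> try ring

/-- The normalizer of the nonsplit Cartan subgroup:
matrices `[[a, bε], [b, a]]` together with matrices `[[a, bε], [-b, -a]]`. -/
def Nns (p : ℕ) (ε : ZMod p) : Subgroup (GL2 p) where
  carrier := { g | ((g : Matrix (Fin 2) (Fin 2) (ZMod p)) 1 1 =
      (g : Matrix (Fin 2) (Fin 2) (ZMod p)) 0 0 ∧
      (g : Matrix (Fin 2) (Fin 2) (ZMod p)) 0 1 = ε * (g : Matrix (Fin 2) (Fin 2) (ZMod p)) 1 0) ∨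
      ((g : Matrix (Fin 2) (Fin 2) (ZMod p)) 1 1 =
      -(g : Matrix (Fin 2) (Fin 2) (ZMod p)) 0 0 ∧
      (g : Matrix (Fin 2) (Fin 2) (ZMod p)) 0 1 =
        -(ε * (g : Matrix (Fin 2) (Fin 2) (ZMod p)) 1 0)) }
  one_mem' := by simp
  mul_mem' := by
    rintro a b (⟨ha1, ha2⟩ | ⟨ha1, ha2⟩) (⟨hb1, hb2⟩ | ⟨hb1, hb2⟩)
    · refine Or.inl ⟨?_, ?_⟩ <;>
        simp [Units.val_mul, Matrix.mul_apply, Fin.sum_univ_two, ha1, ha2, hb1, hb2] <;>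
        try ring
    · refine Or.inr ⟨?_, ?_⟩ <;>
        simp [Units.val_mul, Matrix.mul_apply, Fin.sum_univ_two, ha1, ha2, hb1, hb2] <;>
        try ring
    · refine Or.inr ⟨?_, ?_⟩ <;>
        simp [Units.val_mul, Matrix.mul_apply, Fin.sum_univ_two, ha1, ha2, hb1, hb2] <;>
        try ring
    · refine Or.inl ⟨?_, ?_⟩ <;>
        simp [Units.val_mul, Matrix.mul_apply, Fin.sum_univ_two, ha1, ha2, hb1, hb2] <;>
        try ring
  inv_mem' := by
    intro a h
    have hh : ((a⁻¹ : GL2 p) : Matrix (Fin 2) (Fin 2) (ZMod p))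
        = Ring.inverse ((a : Matrix (Fin 2) (Fin 2) (ZMod p)).det) •
          Matrix.adjugate (a : Matrix (Fin 2) (Fin 2) (ZMod p)) := by
      rw [Matrix.coe_units_inv, Matrix.inv_def]
    rcases h with ⟨h1, h2⟩ | ⟨h1, h2⟩
    · refine Or.inl ⟨?_, ?_⟩ <;> simp [hh, Matrix.adjugate_fin_two, h1, h2] <;> try ring
    · refine Or.inr ⟨?_, ?_⟩ <;> simp [hh, Matrix.adjugate_fin_two, h1, h2] <;> try ring
/-- The matrix `γ = [[1,1],[0,1]]` as an element of `GL₂(𝔽_p)`. -/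
def gam (p : ℕ) : GL2 p where
  val := !![1, 1; 0, 1]
  inv := !![1, -1; 0, 1]
  val_inv := by
    ext i j
    fin_cases i <;> fin_cases j <;>
      simp [Matrix.mul_apply, Fin.sum_univ_two, Matrix.one_apply]
  inv_val := by
    ext i j
    fin_cases i <;> fin_cases j <;>
      simp [Matrix.mul_apply, Fin.sum_univ_two, Matrix.one_apply]

/-- The diagonal matrix `diag(a, 1)` as an element of `GL₂(𝔽_p)`. -/
def dMat (p : ℕ) (a : (ZMod p)ˣ) : GL2 p where
  val := !![(a : ZMod p), 0; 0, 1]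
  inv := !![((a⁻¹ : (ZMod p)ˣ) : ZMod p), 0; 0, 1]
  val_inv := by
    ext i j
    fin_cases i <;> fin_cases j <;>
      simp [Matrix.mul_apply, Fin.sum_univ_two, Matrix.one_apply, ← Units.val_mul]
  inv_val := by
    ext i j
    fin_cases i <;> fin_cases j <;>
      simp [Matrix.mul_apply, Fin.sum_univ_two, Matrix.one_apply, ← Units.val_mul]

/-- `a ↦ diag(a, 1)` as a group homomorphism `𝔽_p^× → GL₂(𝔽_p)`. -/
def dHom (p : ℕ) : (ZMod p)ˣ →* GL2 p where
  toFun := dMat p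
  map_one' := by
    refine Units.ext ?_
    simp only [dMat]
    ext i j
    fin_cases i <;> fin_cases j <;> simp [Matrix.one_apply]
  map_mul' := by
    intro a b
    refine Units.ext ?_
    simp only [dMat, Units.val_mul]
    ext i j
    fin_cases i <;> fin_cases j <;> simp [Matrix.mul_apply, Fin.sum_univ_two]

/-- The semi-Cartan power subgroup `D^k = { diag(a^k, 1) : a ∈ 𝔽_p^× }`. -/
def Dpow (p k : ℕ) : Subgroup (GL2 p) :=
  ((dHom p).comp (powMonoidHom k)).range

/-- The diagonal matrix `diag(1, a)` as an element of `GL₂(𝔽_p)`. -/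
def dMatF (p : ℕ) (a : (ZMod p)ˣ) : GL2 p where
  val := !![1, 0; 0, (a : ZMod p)]
  inv := !![1, 0; 0, ((a⁻¹ : (ZMod p)ˣ) : ZMod p)]
  val_inv := by
    ext i j
    fin_cases i <;> fin_cases j <;>
      simp [Matrix.mul_apply, Fin.sum_univ_two, Matrix.one_apply, ← Units.val_mul]
  inv_val := by
    ext i j
    fin_cases i <;> fin_cases j <;>
      simp [Matrix.mul_apply, Fin.sum_univ_two, Matrix.one_apply, ← Units.val_mul]

/-- `a ↦ diag(1, a)` as a group homomorphism `𝔽_p^× → GL₂(𝔽_p)`. -/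
def dHomF (p : ℕ) : (ZMod p)ˣ →* GL2 p where
  toFun := dMatF p
  map_one' := by
    refine Units.ext ?_
    simp only [dMatF]
    ext i j
    fin_cases i <;> fin_cases j <;> simp [Matrix.one_apply]
  map_mul' := by
    intro a b
    refine Units.ext ?_
    simp only [dMatF, Units.val_mul]
    ext i j
    fin_cases i <;> fin_cases j <;> simp [Matrix.mul_apply, Fin.sum_univ_two]

/-- The flip `(D^k)_f = { diag(1, a^k) : a ∈ 𝔽_p^× }` of the semi-Cartan power subgroup. -/
def DpowF (p k : ℕ) : Subgroup (GL2 p) :=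
  ((dHomF p).comp (powMonoidHom k)).range

/-- Any two elements of the nonsplit Cartan subgroup commute. -/
lemma cns_comm {p : ℕ} {ε : ZMod p} {a b : GL2 p} (ha : a ∈ Cns p ε) (hb : b ∈ Cns p ε) :
    a * b = b * a := by
  obtain ⟨ha1, ha2⟩ := ha
  obtain ⟨hb1, hb2⟩ := hb
  refine Units.ext ?_
  ext i j
  fin_cases i <;> fin_cases j <;>
    · simp only [Units.val_mul]
      simp [Matrix.mul_apply, Fin.sum_univ_two, ha1, ha2, hb1, hb2]
      ring

/-- The subgroup `C_ns(p)^k` of `k`-th powers of elements of the nonsplit Cartan subgroup. -/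
def CnsPow (p : ℕ) (ε : ZMod p) (k : ℕ) : Subgroup (GL2 p) where
  carrier := { g | ∃ x ∈ Cns p ε, x ^ k = g }
  one_mem' := ⟨1, (Cns p ε).one_mem, one_pow k⟩
  mul_mem' := by
    rintro a b ⟨x, hx, rfl⟩ ⟨y, hy, rfl⟩
    exact ⟨x * y, (Cns p ε).mul_mem hx hy,
      Commute.mul_pow (cns_comm hx hy) k⟩
  inv_mem' := by
    rintro a ⟨x, hx, rfl⟩
    exact ⟨x⁻¹, (Cns p ε).inv_mem hx, by rw [inv_pow]⟩

/-- The conjugate subgroup `m H m⁻¹`. -/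
def conjSub {p : ℕ} (m : GL2 p) (H : Subgroup (GL2 p)) : Subgroup (GL2 p) :=
  Subgroup.map (MulAut.conj m).toMonoidHom H


section Aux

open Polynomial

/-- If `b` commutes with `diag(u,1)` with `u ≠ 1`, then `b` is diagonal. -/
lemma mem_Cs_of_comm {p : ℕ} [Fact p.Prime] {u : (ZMod p)ˣ} (hu : u ≠ 1) {b : GL2 p}
    (hb : b * dMat p u = dMat p u * b) : b ∈ Cs p := by
  have h := congrArg Units.val hb
  simp only [Units.val_mul] at h
  have h01 := congrFun (congrFun h 0) 1
  have h10 := congrFun (congrFun h 1) 0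
  have hd : ((dMat p u : GL2 p) : Matrix (Fin 2) (Fin 2) (ZMod p))
      = !![(u : ZMod p), 0; 0, 1] := rfl
  rw [hd] at h01 h10
  simp [Matrix.mul_apply, Fin.sum_univ_two] at h01 h10
  have huv : (u : ZMod p) ≠ 1 := fun hc => hu (Units.ext (by simpa using hc))
  constructor
  · have : (b : Matrix (Fin 2) (Fin 2) (ZMod p)) 0 1 * (1 - (u : ZMod p)) = 0 := by
      linear_combination h01
    rcases mul_eq_zero.mp this with h | h
    · exact h
    · exact absurd (by linear_combination -h) huv
  · have : (b : Matrix (Fin 2) (Fin 2) (ZMod p)) 1 0 * ((u : ZMod p) - 1) = 0 := by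
      linear_combination h10
    rcases mul_eq_zero.mp this with h | h
    · exact h
    · exact absurd (by linear_combination h) huv

/-- If `b` commutes with a non-scalar element of the nonsplit Cartan, then `b ∈ Cns`. -/
lemma mem_Cns_of_comm {p : ℕ} [Fact p.Prime] {ε : ZMod p} (hε0 : ε ≠ 0) {x b : GL2 p}
    (hx : x ∈ Cns p ε) (hx10 : (x : Matrix (Fin 2) (Fin 2) (ZMod p)) 1 0 ≠ 0)
    (hb : b * x = x * b) : b ∈ Cns p ε := by
  obtain ⟨hx1, hx2⟩ := hx
  have h := congrArg Units.val hb
  simp only [Units.val_mul] at h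
  have h00 := congrFun (congrFun h 0) 0
  have h01 := congrFun (congrFun h 0) 1
  simp only [Matrix.mul_apply, Fin.sum_univ_two] at h00 h01
  rw [hx2] at h00
  rw [hx1, hx2] at h01
  set B := (b : Matrix (Fin 2) (Fin 2) (ZMod p))
  set X := (x : Matrix (Fin 2) (Fin 2) (ZMod p))
  constructor
  · have e2 : ε * X 1 0 * (B 0 0 - B 1 1) = 0 := by linear_combination h01
    rcases mul_eq_zero.mp e2 with h' | h'
    · rcases mul_eq_zero.mp h' with h'' | h''
      · exact absurd h'' hε0
      · exact absurd h'' hx10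
    · linear_combination -h'
  · have e1 : (B 0 1 - ε * B 1 0) * X 1 0 = 0 := by linear_combination h00
    rcases mul_eq_zero.mp e1 with h' | h'
    · linear_combination h'
    · exact absurd h' hx10

lemma conj_comm_aux {Gp : Type*} [Group Gp] {b m h : Gp}
    (hc : b * (m * h * m⁻¹) = (m * h * m⁻¹) * b) :
    (m⁻¹ * b * m) * h = h * (m⁻¹ * b * m) := by
  have := congrArg (fun x => m⁻¹ * x * m) hc
  simpa [mul_assoc] using this

/-- The commutative subalgebra of matrices of nonsplit-Cartan shape. -/
def cnsAlg (p : ℕ) (ε : ZMod p) : Subalgebra (ZMod p) (Matrix (Fin 2) (Fin 2) (ZMod p)) where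
  carrier := {M | M 1 1 = M 0 0 ∧ M 0 1 = ε * M 1 0}
  mul_mem' := by
    rintro a b ⟨ha1, ha2⟩ ⟨hb1, hb2⟩
    constructor <;>
      · simp only [Matrix.mul_apply, Fin.sum_univ_two, ha1, ha2, hb1, hb2]
        ring
  one_mem' := by simp [Matrix.one_apply]
  add_mem' := by
    rintro a b ⟨ha1, ha2⟩ ⟨hb1, hb2⟩
    constructor <;> simp [ha1, ha2, hb1, hb2] <;> ring
  zero_mem' := by simp
  algebraMap_mem' := by
    intro r
    constructor <;> simp [Matrix.algebraMap_matrix_apply]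

/-- The nonsplit-Cartan shape subalgebra is commutative. -/
@[reducible]
noncomputable def cnsAlgComm (p : ℕ) (ε : ZMod p) : CommRing (cnsAlg p ε) :=
  { (inferInstance : Ring (cnsAlg p ε)) with
    mul_comm := by
      rintro ⟨a, ha1, ha2⟩ ⟨b, hb1, hb2⟩
      apply Subtype.ext
      show a * b = b * a
      ext i j
      fin_cases i <;> fin_cases j <;>
        · simp [Matrix.mul_apply, Fin.sum_univ_two, ha1, ha2, hb1, hb2]
          ring }

set_option maxHeartbeats 1000000 in
/-- There is a nonscalar `k`-th power in the nonsplit Cartan. -/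
lemma exists_nonscalar_cnspow (p : ℕ) [Fact p.Prime] (k : ℕ) (hk : 1 ≤ k)
    (ε : ZMod p) (hε : ∀ x : ZMod p, x ^ 2 ≠ ε) (hp : 2 * k + 1 < p) :
    ∃ y : GL2 p, y ∈ CnsPow p ε k ∧ y ∈ Cns p ε ∧
      (y : Matrix (Fin 2) (Fin 2) (ZMod p)) 1 0 ≠ 0 := by
  classical
  have hp3 : 3 ≤ p := by omega
  set f : Polynomial (ZMod p) := X ^ 2 - C ε with hfdef
  have hirr : Irreducible f := X_pow_sub_C_irreducible_of_prime Nat.prime_two hε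
  haveI := Fact.mk hirr
  have hf0 : f ≠ 0 := hirr.ne_zero
  let bK := AdjoinRoot.powerBasis hf0
  haveI : Fintype (AdjoinRoot f) := Module.fintypeOfFintype bK.basis
  have hdeg : f.natDegree = 2 := by
    rw [hfdef, Polynomial.natDegree_X_pow_sub_C]
  have hcard : Fintype.card (AdjoinRoot f) = p ^ 2 := by
    rw [Module.card_fintype bK.basis, ZMod.card, Fintype.card_fin]
    show p ^ f.natDegree = p ^ 2
    rw [hdeg]
  have hcardU : Fintype.card (AdjoinRoot f)ˣ = p ^ 2 - 1 := by
    rw [Fintype.card_units, hcard]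
  obtain ⟨g, hg⟩ := IsCyclic.exists_generator (α := (AdjoinRoot f)ˣ)
  have horder : orderOf g = p ^ 2 - 1 := by
    rw [orderOf_eq_card_of_forall_mem_zpowers hg, Nat.card_eq_fintype_card, hcardU]
  -- the matrix J with J^2 = ε
  set J : Matrix (Fin 2) (Fin 2) (ZMod p) := !![0, ε; 1, 0] with hJdef
  have hJsq : J * J = algebraMap (ZMod p) (Matrix (Fin 2) (Fin 2) (ZMod p)) ε := by
    ext i j
    fin_cases i <;> fin_cases j <;>
      simp [hJdef, Matrix.mul_apply, Fin.sum_univ_two, Matrix.algebraMap_matrix_apply]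
  have hJmem : J ∈ cnsAlg p ε := by
    constructor <;> simp [hJdef]
  letI : CommRing (cnsAlg p ε) := cnsAlgComm p ε
  have hJS2 : (⟨J, hJmem⟩ : cnsAlg p ε) ^ 2 = algebraMap (ZMod p) (cnsAlg p ε) ε := by
    rw [pow_two]
    apply Subtype.ext
    show J * J = algebraMap (ZMod p) (Matrix (Fin 2) (Fin 2) (ZMod p)) ε
    exact hJsq
  have hJS : (aeval (⟨J, hJmem⟩ : cnsAlg p ε)) f = 0 := by
    rw [hfdef]
    simp only [map_sub, map_pow, aeval_X, aeval_C]
    rw [hJS2, sub_self]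
  let φ₀ : AdjoinRoot f →ₐ[ZMod p] cnsAlg p ε := AdjoinRoot.liftAlgHom f (Algebra.ofId _ _) ⟨J, hJmem⟩ hJS
  let φ : AdjoinRoot f →ₐ[ZMod p] Matrix (Fin 2) (Fin 2) (ZMod p) :=
    (cnsAlg p ε).val.comp φ₀
  have hshape : ∀ z : AdjoinRoot f, φ z ∈ cnsAlg p ε := fun z => (φ₀ z).2
  have hinj : Function.Injective φ := by
    have := RingHom.injective φ.toRingHom; exact this
  -- the key element
  set M : Matrix (Fin 2) (Fin 2) (ZMod p) := φ ((g ^ k : (AdjoinRoot f)ˣ) : AdjoinRoot f)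
    with hMdef
  obtain ⟨hM1, hM2⟩ := hshape ((g ^ k : (AdjoinRoot f)ˣ) : AdjoinRoot f)
  rw [← hMdef] at hM1 hM2
  have hM10 : M 1 0 ≠ 0 := by
    intro h0
    set c : ZMod p := M 0 0 with hc
    have heq : φ ((g ^ k : (AdjoinRoot f)ˣ) : AdjoinRoot f)
        = φ (algebraMap (ZMod p) (AdjoinRoot f) c) := by
      rw [AlgHom.commutes]
      rw [← hMdef]
      ext i j
      fin_cases i <;> fin_cases j <;>
        simp [Matrix.algebraMap_matrix_apply, hM1, hM2, h0, ← hc]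
    have hu : ((g ^ k : (AdjoinRoot f)ˣ) : AdjoinRoot f)
        = algebraMap (ZMod p) (AdjoinRoot f) c := hinj heq
    have hc0 : c ≠ 0 := by
      intro hcz
      rw [hcz, map_zero] at hu
      exact Units.ne_zero _ hu
    have hc1 : c ^ (p - 1) = 1 := ZMod.pow_card_sub_one_eq_one hc0
    have hpow : g ^ (k * (p - 1)) = 1 := by
      apply Units.ext
      rw [pow_mul]
      push_cast
      rw [← Units.val_pow_eq_pow_val, hu, ← map_pow, hc1, _root_.map_one]
    have hdvd : orderOf g ∣ k * (p - 1) := orderOf_dvd_of_pow_eq_one hpow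
    rw [horder] at hdvd
    obtain ⟨q, rfl⟩ : ∃ q, p = q + 1 := ⟨p - 1, by omega⟩
    have hle : (q + 1) ^ 2 - 1 ≤ k * q := by
      apply Nat.le_of_dvd
      · have : 1 ≤ q := by omega
        positivity
      · simpa using hdvd
    have hq : (q + 1) ^ 2 - 1 = q * (q + 2) := by ring_nf; omega
    rw [hq] at hle
    have hk2 : q + 2 ≤ k := by
      have hq0 : 0 < q := by omega
      exact Nat.le_of_mul_le_mul_left (by linarith [hle] : q * (q + 2) ≤ q * k) hq0
    omega
  -- assemble
  set x : GL2 p := Units.map φ.toRingHom.toMonoidHom g with hxdef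
  have hxval : (x : Matrix (Fin 2) (Fin 2) (ZMod p)) = φ ((g : (AdjoinRoot f)ˣ) : AdjoinRoot f) :=
    rfl
  have hxCns : x ∈ Cns p ε := by
    obtain ⟨h1, h2⟩ := hshape ((g : (AdjoinRoot f)ˣ) : AdjoinRoot f)
    exact ⟨by rw [hxval]; exact h1, by rw [hxval]; exact h2⟩
  refine ⟨x ^ k, ⟨x, hxCns, rfl⟩, Subgroup.pow_mem _ hxCns k, ?_⟩
  have hxk : ((x ^ k : GL2 p) : Matrix (Fin 2) (Fin 2) (ZMod p)) = M := by
    rw [Units.val_pow_eq_pow_val, hxval, ← map_pow, hMdef, Units.val_pow_eq_pow_val]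
  rw [hxk]
  exact hM10

end Aux

theorem stmt1 (p : ℕ) [Fact p.Prime] (hp2 : p ≠ 2)
    (k : ℕ) (hk : 1 ≤ k)
    (ε : ZMod p) (hε : ∀ x : ZMod p, x ^ 2 ≠ ε)
    (G : Subgroup (GL2 p)) (hab : ∀ a ∈ G, ∀ b ∈ G, a * b = b * a)
    (hconj : (∃ m : GL2 p, conjSub m (Dpow p k) ≤ G) ∨
      (∃ m : GL2 p, conjSub m (CnsPow p ε k) ≤ G))
    (hp : 2 * k + 1 < p) :
    (∃ m : GL2 p, conjSub m G ≤ Cs p) ∨ (∃ m : GL2 p, conjSub m G ≤ Cns p ε) := by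
  rcases hconj with ⟨m, hm⟩ | ⟨m, hm⟩
  · -- split case
    obtain ⟨a, ha⟩ := IsCyclic.exists_generator (α := (ZMod p)ˣ)
    have hord : orderOf a = p - 1 := by
      rw [orderOf_eq_card_of_forall_mem_zpowers ha, Nat.card_eq_fintype_card, ZMod.card_units]
    have hak : a ^ k ≠ 1 := by
      intro h1
      have := orderOf_dvd_of_pow_eq_one h1
      rw [hord] at this
      have := Nat.le_of_dvd (by omega) this
      omega
    set h₀ : GL2 p := dMat p (a ^ k) with hh0
    have hmemD : h₀ ∈ Dpow p k := ⟨a, rfl⟩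
    have hG : m * h₀ * m⁻¹ ∈ G := by
      apply hm
      exact ⟨h₀, hmemD, rfl⟩
    left
    refine ⟨m⁻¹, ?_⟩
    rintro _ ⟨b, hbG, rfl⟩
    have hcomm : b * (m * h₀ * m⁻¹) = (m * h₀ * m⁻¹) * b := hab b hbG _ hG
    have hcomm2 : (m⁻¹ * b * m) * h₀ = h₀ * (m⁻¹ * b * m) := conj_comm_aux hcomm
    have : m⁻¹ * b * m ∈ Cs p := mem_Cs_of_comm hak hcomm2
    simpa [MulAut.conj] using this
  · -- nonsplit case
    have hε0 : ε ≠ 0 := fun h => hε 0 (by simp [h])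
    obtain ⟨y, hyP, hyC, hy10⟩ := exists_nonscalar_cnspow p k hk ε hε hp
    have hG : m * y * m⁻¹ ∈ G := by
      apply hm
      exact ⟨y, hyP, rfl⟩
    right
    refine ⟨m⁻¹, ?_⟩
    rintro _ ⟨b, hbG, rfl⟩
    have hcomm : b * (m * y * m⁻¹) = (m * y * m⁻¹) * b := hab b hbG _ hG
    have hcomm2 : (m⁻¹ * b * m) * y = y * (m⁻¹ * b * m) := conj_comm_aux hcomm
    have : m⁻¹ * b * m ∈ Cns p ε := mem_Cns_of_comm hε0 hyC hy10 hcomm2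
    simpa [MulAut.conj] using this
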